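/- Let G be a finite connected simple graph in which every vertex has degree at least 3, and let l be a positive edge-length function on G. Then the topological entropy h(l) of the length function on closed non-backtracking walks is finite and strictly positive: 0 < h(l) < ∞. -/

import Mathlib

/-- A cyclic sequence of darts `d : Fin (n+1) → G.Dart` is a closed non-backtracking walk
if consecutive darts (cyclically) are composable and no dart is followed by its reversal. -/
def IsClosedNBWalk {V : Type*} (G : SimpleGraph V) {n : ℕ} (d : Fin (n + 1) → G.Dart) : Prop :=
  ∀ i : Fin (n + 1), (d i).toProd.2 = (d (i + 1)).toProd.1 ∧ d (i + 1) ≠ (d i).symm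

/-- The `l`-length of a cyclic sequence of darts: the sum of the lengths of the
underlying edges of its darts. -/
noncomputable def nbWalkLength {V : Type*} (G : SimpleGraph V) (l : Sym2 V → ℝ) {n : ℕ}
    (d : Fin (n + 1) → G.Dart) : ℝ :=
  ∑ i : Fin (n + 1), l (d i).edge

/-- `N_l(T)`: the number of closed non-backtracking walks of `l`-length at most `T`. -/
noncomputable def nbWalkCount {V : Type*} (G : SimpleGraph V) (l : Sym2 V → ℝ) (T : ℝ) : ℕ :=
  Nat.card {w : Σ n : ℕ, Fin (n + 1) → G.Dart //
    IsClosedNBWalk G w.2 ∧ nbWalkLength G l w.2 ≤ T}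

/-- The topological entropy of a metric `l` on the graph `G`:
`h(l) := limsup_{T → ∞} (1/T) · log N_l(T)`, valued in `[0, ∞]`. -/
noncomputable def graphEntropy {V : Type*} (G : SimpleGraph V) (l : Sym2 V → ℝ) : ENNReal :=
  Filter.limsup (fun T : ℝ => ENNReal.ofReal (Real.log (nbWalkCount G l T : ℝ) / T))
    Filter.atTop


namespace NBAux

open SimpleGraph


variable {V : Type*} {G : SimpleGraph V}

lemma getVert_injOn {u v : V} (p : G.Walk u v) (hp : p.IsPath) :
    ∀ i, i ≤ p.length → ∀ j, j ≤ p.length → p.getVert i = p.getVert j → i = j := by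
  induction p with
  | nil => intro i hi j hj _; simp only [SimpleGraph.Walk.length_nil] at hi hj; omega
  | @cons a b c h q ih =>
    rw [SimpleGraph.Walk.cons_isPath_iff] at hp
    intro i hi j hj hij
    rw [SimpleGraph.Walk.length_cons] at hi hj
    match i, j with
    | 0, 0 => rfl
    | 0, j+1 =>
      exfalso
      apply hp.2
      rw [SimpleGraph.Walk.mem_support_iff_exists_getVert]
      refine ⟨j, ?_, by omega⟩
      rw [SimpleGraph.Walk.getVert_cons_succ] at hij
      simpa using hij.symm
    | i+1, 0 =>
      exfalso
      apply hp.2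
      rw [SimpleGraph.Walk.mem_support_iff_exists_getVert]
      refine ⟨i, ?_, by omega⟩
      rw [SimpleGraph.Walk.getVert_cons_succ] at hij
      simpa using hij
    | i+1, j+1 =>
      rw [SimpleGraph.Walk.getVert_cons_succ, SimpleGraph.Walk.getVert_cons_succ] at hij
      have := ih hp.1 i (by omega) j (by omega) hij
      omega



variable {V : Type*} {G : SimpleGraph V}

lemma length_lower {l : Sym2 V → ℝ} {m : ℝ} (hml : ∀ e ∈ G.edgeSet, m ≤ l e)
    {n : ℕ} (d : Fin (n + 1) → G.Dart) : (n + 1 : ℝ) * m ≤ nbWalkLength G l d := by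
  have h := Finset.card_nsmul_le_sum (Finset.univ : Finset (Fin (n+1)))
    (fun i => l (d i).edge) m (fun i _ => hml _ (d i).edge_mem)
  simpa [nbWalkLength, nsmul_eq_mul, mul_comm] using h

lemma exists_injection (l : Sym2 V → ℝ) {m : ℝ} (hm : 0 < m)
    (hml : ∀ e ∈ G.edgeSet, m ≤ l e) (T : ℝ) (K : ℕ) (hK : T ≤ (K + 1) * m) :
    ∃ f : {w : Σ n : ℕ, Fin (n + 1) → G.Dart //
        IsClosedNBWalk G w.2 ∧ nbWalkLength G l w.2 ≤ T} →
        Fin (K + 1) × (Fin (K + 1) → Option G.Dart), Function.Injective f := by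
  have hbound : ∀ w : {w : Σ n : ℕ, Fin (n + 1) → G.Dart //
      IsClosedNBWalk G w.2 ∧ nbWalkLength G l w.2 ≤ T}, w.1.1 < K + 1 := by
    rintro ⟨⟨n, d⟩, -, hlen⟩
    have h1 : (n + 1 : ℝ) * m ≤ T := le_trans (length_lower hml d) hlen
    have h2 : (n + 1 : ℝ) ≤ (K + 1 : ℝ) := by
      have := le_trans h1 hK
      nlinarith
    have : (n : ℝ) ≤ (K : ℝ) := by linarith
    exact_mod_cast by exact_mod_cast Nat.lt_succ_of_le (by exact_mod_cast this)
  refine ⟨fun w => (⟨w.1.1, hbound w⟩,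
    fun i => if h : i.1 < w.1.1 + 1 then some (w.1.2 ⟨i.1, h⟩) else none), ?_⟩
  rintro ⟨⟨n, d⟩, hw⟩ ⟨⟨n', d'⟩, hw'⟩ h
  rw [Prod.mk.injEq] at h
  obtain ⟨h1, h2⟩ := h
  have hnn : n = n' := by simpa using congrArg Fin.val h1
  subst hnn
  have hdd : d = d' := by
    funext j
    have hb : n < K + 1 := hbound ⟨⟨n, d⟩, hw⟩
    have hj : j.1 < K + 1 := by omega
    have := congrFun h2 ⟨j.1, hj⟩
    simp only [j.2, dif_pos] at this
    simpa using this
  subst hdd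
  rfl

lemma count_le (l : Sym2 V → ℝ) {m : ℝ} (hm : 0 < m)
    (hml : ∀ e ∈ G.edgeSet, m ≤ l e) (T : ℝ) (K : ℕ) (hK : T ≤ (K + 1) * m)
    [Fintype V] [DecidableRel G.Adj] :
    nbWalkCount G l T ≤ (K + 1) * (Fintype.card G.Dart + 1) ^ (K + 1) := by
  obtain ⟨f, hf⟩ := exists_injection l hm hml T K hK
  have := Nat.card_le_card_of_injective f hf
  rw [nbWalkCount]
  refine le_trans this ?_
  rw [Nat.card_eq_fintype_card]
  simp [Fintype.card_fun]

lemma walk_finite (l : Sym2 V → ℝ) {m : ℝ} (hm : 0 < m)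
    (hml : ∀ e ∈ G.edgeSet, m ≤ l e) (T : ℝ) [Fintype V] [DecidableRel G.Adj] :
    Finite {w : Σ n : ℕ, Fin (n + 1) → G.Dart //
      IsClosedNBWalk G w.2 ∧ nbWalkLength G l w.2 ≤ T} := by
  have hK : T ≤ (⌈T / m⌉₊ + 1) * m := by
    rcases le_or_gt T 0 with h | h
    · nlinarith [Nat.cast_nonneg (α := ℝ) ⌈T / m⌉₊]
    · have h1 : T / m ≤ (⌈T / m⌉₊ : ℝ) := Nat.le_ceil _
      rw [div_le_iff₀ hm] at h1
      nlinarith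
  obtain ⟨f, hf⟩ := exists_injection l hm hml T ⌈T / m⌉₊ hK
  exact Finite.of_injective f hf


variable {V : Type*} {G : SimpleGraph V}

lemma dart_ne_symm {d d' : G.Dart} (h : d.toProd ≠ d'.toProd.swap) : d ≠ d'.symm := by
  intro he
  exact h (by rw [he, Dart.symm_toProd])

/-- The dart sequence of the loop `u, y 0, y 1, …, y (c-1), u`, extended periodically
with period `c+1`. -/
def loopAux (u : V) (y : ℕ → V) (c : ℕ)
    (hadj0 : G.Adj u (y 0)) (hadjc : G.Adj (y (c - 1)) u)
    (hadj : ∀ t, t + 1 < c → G.Adj (y t) (y (t + 1))) : ℕ → G.Dart := fun t =>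
  if h0 : t % (c + 1) = 0 then ⟨(u, y 0), hadj0⟩
  else if hc : t % (c + 1) = c then ⟨(y (c - 1), u), hadjc⟩
  else ⟨(y (t % (c + 1) - 1), y (t % (c + 1))), by
    have hr : t % (c + 1) < c + 1 := Nat.mod_lt _ (by omega)
    have h := hadj (t % (c + 1) - 1) (by omega)
    have he : t % (c + 1) - 1 + 1 = t % (c + 1) := by omega
    rwa [he] at h⟩

lemma loopAux_toProd (u : V) (y : ℕ → V) (c : ℕ)
    (hadj0 : G.Adj u (y 0)) (hadjc : G.Adj (y (c - 1)) u)
    (hadj : ∀ t, t + 1 < c → G.Adj (y t) (y (t + 1))) (t : ℕ) :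
    (loopAux u y c hadj0 hadjc hadj t).toProd =
      if t % (c + 1) = 0 then (u, y 0)
      else if t % (c + 1) = c then (y (c - 1), u)
      else (y (t % (c + 1) - 1), y (t % (c + 1))) := by
  unfold loopAux
  split_ifs <;> rfl

lemma succ_mod (t c : ℕ) (hc : 0 < c) :
    (t + 1) % (c + 1) = if t % (c + 1) = c then 0 else t % (c + 1) + 1 := by
  have h1 : (t + 1) % (c + 1) = (t % (c + 1) + 1 % (c + 1)) % (c + 1) := by
    rw [← Nat.add_mod]
  have h2 : 1 % (c + 1) = 1 := Nat.mod_eq_of_lt (by omega)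
  have hr : t % (c + 1) < c + 1 := Nat.mod_lt _ (by omega)
  rw [h2] at h1
  split_ifs with h
  · rw [h1, h, Nat.mod_self]
  · rw [h1, Nat.mod_eq_of_lt (by omega)]

lemma loopAux_spec (u : V) (y : ℕ → V) (c : ℕ)
    (hadj0 : G.Adj u (y 0)) (hadjc : G.Adj (y (c - 1)) u)
    (hadj : ∀ t, t + 1 < c → G.Adj (y t) (y (t + 1)))
    (hc : 2 ≤ c) (hneu : ∀ t, t < c → y t ≠ u)
    (hinj : ∀ s t, s < c → t < c → y s = y t → s = t) (t : ℕ) :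
    (loopAux u y c hadj0 hadjc hadj t).toProd.2
      = (loopAux u y c hadj0 hadjc hadj (t + 1)).toProd.1 ∧
      loopAux u y c hadj0 hadjc hadj (t + 1) ≠ (loopAux u y c hadj0 hadjc hadj t).symm := by
  set L := loopAux u y c hadj0 hadjc hadj with hL
  have hr : t % (c + 1) < c + 1 := Nat.mod_lt _ (by omega)
  have hs := succ_mod t c (by omega)
  have hTP := loopAux_toProd u y c hadj0 hadjc hadj
  rcases Nat.lt_or_ge (t % (c + 1)) 1 with h0 | h1
  · -- r = 0
    have h0 : t % (c + 1) = 0 := by omega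
    have hs' : (t + 1) % (c + 1) = 1 := by rw [hs, if_neg (by omega), h0]
    have e1 : (L t).toProd = (u, y 0) := by rw [hTP, if_pos h0]
    have e2 : (L (t + 1)).toProd = (y 0, y 1) := by
      rw [hTP, hs', if_neg (by omega), if_neg (by omega)]
    refine ⟨by rw [e1, e2], dart_ne_symm ?_⟩
    rw [e1, e2]
    intro h
    rw [Prod.ext_iff] at h
    exact hneu 1 (by omega) h.2
  rcases Nat.lt_or_ge (t % (c + 1)) c with hlt | hge
  · -- 1 ≤ r < c
    have hs' : (t + 1) % (c + 1) = t % (c + 1) + 1 := by rw [hs, if_neg (by omega)]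
    have e1 : (L t).toProd = (y (t % (c + 1) - 1), y (t % (c + 1))) := by
      rw [hTP, if_neg (by omega), if_neg (by omega)]
    rcases Nat.lt_or_ge (t % (c + 1) + 1) c with hlt2 | hge2
    · have e2 : (L (t + 1)).toProd = (y (t % (c + 1)), y (t % (c + 1) + 1)) := by
        rw [hTP, hs', if_neg (by omega), if_neg (by omega)]
        simp
      refine ⟨by rw [e1, e2], dart_ne_symm ?_⟩
      rw [e1, e2]
      intro h
      rw [Prod.ext_iff] at h
      have := hinj _ _ (by omega) (by omega) h.2
      omega
    · -- r + 1 = c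
      have hc2 : t % (c + 1) = c - 1 := by omega
      have e2 : (L (t + 1)).toProd = (y (c - 1), u) := by
        rw [hTP, hs', if_neg (by omega), if_pos (by omega)]
      refine ⟨by rw [e1, e2, hc2], dart_ne_symm ?_⟩
      rw [e1, e2]
      intro h
      rw [Prod.ext_iff] at h
      exact hneu (t % (c + 1) - 1) (by omega) h.2.symm
  · -- r = c
    have hcc : t % (c + 1) = c := by omega
    have hs' : (t + 1) % (c + 1) = 0 := by rw [hs, if_pos hcc]
    have e1 : (L t).toProd = (y (c - 1), u) := by
      rw [hTP, if_neg (by omega), if_pos hcc]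
    have e2 : (L (t + 1)).toProd = (u, y 0) := by rw [hTP, hs', if_pos rfl]
    refine ⟨by rw [e1, e2], dart_ne_symm ?_⟩
    rw [e1, e2]
    intro h
    rw [Prod.ext_iff] at h
    have := hinj _ _ (by omega) (by omega) h.2
    omega


variable {V : Type*} {G : SimpleGraph V}

section
variable [Fintype V] [DecidableRel G.Adj]

lemma exists_theta (hconn : G.Connected) (hdeg : ∀ v : V, 3 ≤ G.degree v) :
    ∃ (u : V) (v : V) (p : G.Walk u v) (i1 i2 i3 : ℕ),
      p.IsPath ∧ 1 ≤ i1 ∧ i1 < i2 ∧ i2 < i3 ∧ i3 ≤ p.length ∧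
      G.Adj u (p.getVert i1) ∧ G.Adj u (p.getVert i2) ∧ G.Adj u (p.getVert i3) := by
  obtain ⟨v0⟩ := hconn.nonempty
  set S : Set ℕ := {k | ∃ (a b : V) (p : G.Walk a b), p.IsPath ∧ p.length = k} with hS
  have hne : S.Nonempty := ⟨0, v0, v0, Walk.nil, Walk.IsPath.nil, rfl⟩
  have hbdd : BddAbove S := by
    refine ⟨Fintype.card V, ?_⟩
    rintro k ⟨a, b, p, hp, rfl⟩
    exact hp.length_lt.le
  obtain ⟨u, v, p, hp, hlen⟩ := Nat.sSup_mem hne hbdd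
  have hmax : ∀ (a b : V) (q : G.Walk a b), q.IsPath → q.length ≤ p.length := by
    intro a b q hq
    rw [hlen]
    exact le_csSup hbdd ⟨a, b, q, hq, rfl⟩
  have hsupp : ∀ w : V, G.Adj u w → w ∈ p.support := by
    intro w hw
    by_contra hns
    have hq : (Walk.cons hw.symm p).IsPath := (Walk.cons_isPath_iff _ _).2 ⟨hp, hns⟩
    have := hmax _ _ _ hq
    rw [Walk.length_cons] at this
    omega
  set I : Finset ℕ := (Finset.range (p.length + 1)).filter
    (fun i => 1 ≤ i ∧ G.Adj u (p.getVert i)) with hI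
  have hsurj : Set.SurjOn p.getVert (I : Set ℕ) (G.neighborFinset u : Set V) := by
    intro w hw
    have hadj : G.Adj u w := by
      rw [← mem_neighborFinset]; exact_mod_cast hw
    obtain ⟨i, hgi, hile⟩ := (Walk.mem_support_iff_exists_getVert).1 (hsupp w hadj)
    refine ⟨i, ?_, hgi⟩
    simp only [hI, Finset.coe_filter, Finset.mem_range, Set.mem_setOf_eq]
    refine ⟨by omega, ?_, hgi.symm ▸ hadj⟩
    rcases Nat.eq_zero_or_pos i with h0 | h1
    · exfalso
      rw [h0, Walk.getVert_zero] at hgi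
      exact hadj.ne' hgi.symm
    · omega
  have hcard : 3 ≤ I.card := by
    have := Finset.card_le_card_of_surjOn p.getVert hsurj
    have hd := hdeg u
    rw [← card_neighborFinset_eq_degree] at hd
    omega
  -- extract three increasing elements
  have h1 : I.Nonempty := Finset.card_pos.1 (by omega)
  set i1 := I.min' h1 with hi1
  have hi1I : i1 ∈ I := I.min'_mem h1
  set I2 := I.erase i1 with hI2
  have hcard2 : 2 ≤ I2.card := by
    rw [hI2, Finset.card_erase_of_mem hi1I]; omega
  have h2 : I2.Nonempty := Finset.card_pos.1 (by omega)
  set i2 := I2.min' h2 with hi2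
  have hi2I2 : i2 ∈ I2 := I2.min'_mem h2
  set I3 := I2.erase i2 with hI3
  have hcard3 : 1 ≤ I3.card := by
    rw [hI3, Finset.card_erase_of_mem hi2I2]; omega
  have h3 : I3.Nonempty := Finset.card_pos.1 (by omega)
  set i3 := I3.min' h3 with hi3
  have hi3I3 : i3 ∈ I3 := I3.min'_mem h3
  have hi2I : i2 ∈ I := Finset.mem_of_mem_erase hi2I2
  have hi3I2 : i3 ∈ I2 := Finset.mem_of_mem_erase hi3I3
  have hi3I : i3 ∈ I := Finset.mem_of_mem_erase hi3I2
  have h12 : i1 < i2 :=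
    lt_of_le_of_ne (I.min'_le i2 hi2I) (Ne.symm (Finset.ne_of_mem_erase hi2I2))
  have h23 : i2 < i3 :=
    lt_of_le_of_ne (I2.min'_le i3 hi3I2) (Ne.symm (Finset.ne_of_mem_erase hi3I3))
  have hmem : ∀ i ∈ I, 1 ≤ i ∧ i ≤ p.length ∧ G.Adj u (p.getVert i) := by
    intro i hi
    rw [hI, Finset.mem_filter, Finset.mem_range] at hi
    exact ⟨hi.2.1, by omega, hi.2.2⟩
  obtain ⟨ha1, hb1, hc1⟩ := hmem i1 hi1I
  obtain ⟨ha2, hb2, hc2⟩ := hmem i2 hi2I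
  obtain ⟨ha3, hb3, hc3⟩ := hmem i3 hi3I
  exact ⟨u, v, p, i1, i2, i3, hp, ha1, h12, h23, hb3, hc1, hc2, hc3⟩

end

section
variable [Fintype V] [DecidableRel G.Adj]

lemma exists_two_loops (hconn : G.Connected) (hdeg : ∀ v : V, 3 ≤ G.degree v) :
    ∃ n : ℕ, 1 < n ∧ ∃ W : Bool → ℕ → G.Dart,
      (∀ b t, (W b t).toProd.2 = (W b (t + 1)).toProd.1 ∧ W b (t + 1) ≠ (W b t).symm) ∧
      (∀ b b' t t', t % n = n - 1 → t' % n = 0 →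
        (W b t).toProd.2 = (W b' t').toProd.1 ∧ W b' t' ≠ (W b t).symm) ∧
      (∀ t, t % n = 1 → W true t ≠ W false t) := by
  obtain ⟨u, v, p, i1, i2, i3, hp, ha1, h12, h23, hb3, hc1, hc2, hc3⟩ := exists_theta hconn hdeg
  have hxinj := getVert_injOn p hp
  have hx0 : p.getVert 0 = u := p.getVert_zero
  set x : ℕ → V := p.getVert with hx
  set cA := i2 - i1 + 1 with hcA
  set cB := i3 - i2 + 1 with hcB
  have hcA2 : 2 ≤ cA := by omega
  have hcB2 : 2 ≤ cB := by omega
  -- loop A : descending from x i2 to x i1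
  have hadj0A : G.Adj u (x (i2 - 0)) := by simpa using hc2
  have hadjcA : G.Adj (x (i2 - (cA - 1))) u := by
    have he : i2 - (cA - 1) = i1 := by omega
    rw [he]; exact hc1.symm
  have hadjA : ∀ t, t + 1 < cA → G.Adj (x (i2 - t)) (x (i2 - (t + 1))) := by
    intro t ht
    have hlt : i2 - t - 1 < p.length := by omega
    have h := (p.adj_getVert_succ hlt).symm
    have e1 : i2 - t - 1 + 1 = i2 - t := by omega
    have e2 : i2 - (t + 1) = i2 - t - 1 := by omega
    rw [e1] at h
    rw [e2]
    exact h
  have hneuA : ∀ t, t < cA → x (i2 - t) ≠ u := by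
    intro t ht heq
    rw [← hx0] at heq
    have := hxinj (i2 - t) (by omega) 0 (by omega) heq
    omega
  have hinjA : ∀ s t, s < cA → t < cA → x (i2 - s) = x (i2 - t) → s = t := by
    intro s t hs ht heq
    have := hxinj (i2 - s) (by omega) (i2 - t) (by omega) heq
    omega
  -- loop B : ascending from x i2 to x i3
  have hadj0B : G.Adj u (x (i2 + 0)) := by simpa using hc2
  have hadjcB : G.Adj (x (i2 + (cB - 1))) u := by
    have he : i2 + (cB - 1) = i3 := by omega
    rw [he]; exact hc3.symm
  have hadjB : ∀ t, t + 1 < cB → G.Adj (x (i2 + t)) (x (i2 + (t + 1))) := by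
    intro t ht
    have hlt : i2 + t < p.length := by omega
    have h := p.adj_getVert_succ hlt
    have e : i2 + (t + 1) = i2 + t + 1 := by omega
    rw [e]
    exact h
  have hneuB : ∀ t, t < cB → x (i2 + t) ≠ u := by
    intro t ht heq
    rw [← hx0] at heq
    have := hxinj (i2 + t) (by omega) 0 (by omega) heq
    omega
  have hinjB : ∀ s t, s < cB → t < cB → x (i2 + s) = x (i2 + t) → s = t := by
    intro s t hs ht heq
    have := hxinj (i2 + s) (by omega) (i2 + t) (by omega) heq
    omega
  set LA := loopAux u (fun k => x (i2 - k)) cA hadj0A hadjcA hadjA with hLA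
  set LB := loopAux u (fun k => x (i2 + k)) cB hadj0B hadjcB hadjB with hLB
  set n := (cA + 1) * (cB + 1) with hn
  have hn9 : 9 ≤ n := le_trans (by norm_num)
    (Nat.mul_le_mul (show 3 ≤ cA + 1 by omega) (show 3 ≤ cB + 1 by omega))
  -- mod facts
  have hmodA : (n - 1) % (cA + 1) = cA := by
    have he : n - 1 = (cA + 1) * cB + cA := by
      have : (cA + 1) * (cB + 1) = (cA + 1) * cB + (cA + 1) := by ring
      omega
    rw [he, Nat.mul_add_mod]
    exact Nat.mod_eq_of_lt (by omega)
  have hmodB : (n - 1) % (cB + 1) = cB := by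
    have he : n - 1 = (cB + 1) * cA + cB := by
      have : (cA + 1) * (cB + 1) = (cB + 1) * cA + (cB + 1) := by ring
      omega
    rw [he, Nat.mul_add_mod]
    exact Nat.mod_eq_of_lt (by omega)
  have hdvdA : (cA + 1) ∣ n := ⟨cB + 1, rfl⟩
  have hdvdB : (cB + 1) ∣ n := ⟨cA + 1, by rw [hn]; ring⟩
  refine ⟨n, by omega, fun b => cond b LA LB, ?_, ?_, ?_⟩
  · intro b t
    cases b
    · exact loopAux_spec u _ cB hadj0B hadjcB hadjB hcB2 hneuB hinjB t
    · exact loopAux_spec u _ cA hadj0A hadjcA hadjA hcA2 hneuA hinjA t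
  · intro b b' t t' hmt hmt'
    -- values of L at such t: last dart of the loop; at t': first dart
    have keyLastA : (LA t).toProd = (x (i2 - (cA - 1)), u) := by
      rw [hLA, loopAux_toProd]
      have h : t % (cA + 1) = cA := by
        rw [← Nat.mod_mod_of_dvd t hdvdA, hmt, hmodA]
      rw [h, if_neg (by omega), if_pos rfl]
    have keyLastB : (LB t).toProd = (x (i2 + (cB - 1)), u) := by
      rw [hLB, loopAux_toProd]
      have h : t % (cB + 1) = cB := by
        rw [← Nat.mod_mod_of_dvd t hdvdB, hmt, hmodB]
      rw [h, if_neg (by omega), if_pos rfl]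
    have keyFirstA : (LA t').toProd = (u, x (i2 - 0)) := by
      rw [hLA, loopAux_toProd]
      have h : t' % (cA + 1) = 0 := by
        rw [← Nat.mod_mod_of_dvd t' hdvdA, hmt', Nat.zero_mod]
      rw [h, if_pos rfl]
    have keyFirstB : (LB t').toProd = (u, x (i2 + 0)) := by
      rw [hLB, loopAux_toProd]
      have h : t' % (cB + 1) = 0 := by
        rw [← Nat.mod_mod_of_dvd t' hdvdB, hmt', Nat.zero_mod]
      rw [h, if_pos rfl]
    have heA : i2 - (cA - 1) = i1 := by omega
    have heB : i2 + (cB - 1) = i3 := by omega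
    have hxne : ∀ j, j ≤ p.length → j ≠ i2 → x i2 ≠ x j := by
      intro j hj hne heq
      exact hne (hxinj j hj i2 (by omega) heq.symm)
    cases b <;> cases b' <;> simp only [cond_true, cond_false] <;>
      refine ⟨?_, dart_ne_symm ?_⟩
    · rw [keyLastB, keyFirstB]
    · rw [keyFirstB, keyLastB]
      intro h
      rw [Prod.ext_iff] at h
      exact hxne (i2 + (cB - 1)) (by omega) (by omega) h.2
    · rw [keyLastB, keyFirstA]
    · rw [keyFirstA, keyLastB]
      intro h
      rw [Prod.ext_iff] at h
      exact hxne (i2 + (cB - 1)) (by omega) (by omega) h.2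
    · rw [keyLastA, keyFirstB]
    · rw [keyFirstB, keyLastA]
      intro h
      rw [Prod.ext_iff] at h
      exact hxne (i2 - (cA - 1)) (by omega) (by omega) h.2
    · rw [keyLastA, keyFirstA]
    · rw [keyFirstA, keyLastA]
      intro h
      rw [Prod.ext_iff] at h
      exact hxne (i2 - (cA - 1)) (by omega) (by omega) h.2
  · intro t hmt h
    have hA : t % (cA + 1) = 1 := by
      rw [← Nat.mod_mod_of_dvd t hdvdA, hmt]
      exact Nat.mod_eq_of_lt (by omega)
    have hB : t % (cB + 1) = 1 := by
      rw [← Nat.mod_mod_of_dvd t hdvdB, hmt]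
      exact Nat.mod_eq_of_lt (by omega)
    have eA : (LA t).toProd = (x (i2 - 0), x (i2 - 1)) := by
      rw [hLA, loopAux_toProd, hA, if_neg (by omega), if_neg (by omega)]
    have eB : (LB t).toProd = (x (i2 + 0), x (i2 + 1)) := by
      rw [hLB, loopAux_toProd, hB, if_neg (by omega), if_neg (by omega)]
    have := congrArg Dart.toProd h
    simp only [cond_true, cond_false] at this
    rw [eA, eB, Prod.ext_iff] at this
    have := hxinj (i2 - 1) (by omega) (i2 + 1) (by omega) this.2
    omega


end

variable {V : Type*} {G : SimpleGraph V}

lemma pred_mod {t n : ℕ} (hn : 0 < n) (h : (t + 1) % n = 0) : t % n = n - 1 := by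
  have h1 : (t + 1) % n = (t % n + 1 % n) % n := Nat.add_mod t 1 n
  have hr : t % n < n := Nat.mod_lt _ hn
  rcases Nat.eq_or_lt_of_le (Nat.succ_le_of_lt hr) with he | hlt
  · omega
  · rcases Nat.eq_or_lt_of_le hn with h1' | h1'
    · omega
    · have h2 : 1 % n = 1 := Nat.mod_eq_of_lt (by omega)
      rw [h2, Nat.mod_eq_of_lt hlt] at h1
      omega

lemma succ_div_eq {t n : ℕ} (hn : 0 < n) (h : (t + 1) % n ≠ 0) : (t + 1) / n = t / n := by
  rw [Nat.succ_div, if_neg (fun hd => h ((Nat.mod_eq_zero_of_dvd hd)))]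
  · omega

lemma count_lower (l : Sym2 V → ℝ) [Fintype V] [DecidableRel G.Adj]
    {n : ℕ} (hn : 1 < n) {W : Bool → ℕ → G.Dart}
    (hW : ∀ b t, (W b t).toProd.2 = (W b (t + 1)).toProd.1 ∧ W b (t + 1) ≠ (W b t).symm)
    (hX : ∀ b b' t t', t % n = n - 1 → t' % n = 0 →
      (W b t).toProd.2 = (W b' t').toProd.1 ∧ W b' t' ≠ (W b t).symm)
    (hne : ∀ t, t % n = 1 → W true t ≠ W false t)
    {Lmax T : ℝ} (hLm : ∀ d : G.Dart, l d.edge ≤ Lmax)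
    (k : ℕ) (hk : 0 < k) (hT : ((k * n : ℕ) : ℝ) * Lmax ≤ T)
    (hfin : Finite {w : Σ m : ℕ, Fin (m + 1) → G.Dart //
      IsClosedNBWalk G w.2 ∧ nbWalkLength G l w.2 ≤ T}) :
    2 ^ k ≤ nbWalkCount G l T := by
  have hn0 : 0 < n := by omega
  set N := k * n - 1 with hNdef
  have hkn : 2 ≤ k * n := by
    simpa using Nat.mul_le_mul hk (show 2 ≤ n by omega)
  have hN : N + 1 = k * n := by omega
  -- extension of a bool string
  let ext : (Fin k → Bool) → ℕ → Bool := fun s q => if h : q < k then s ⟨q, h⟩ else true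
  let ds : (Fin k → Bool) → Fin (N + 1) → G.Dart := fun s i => W (ext s (i.1 / n)) i.1
  have hone : (1 : Fin (N + 1)).val = 1 := by
    rw [Fin.val_one']
    exact Nat.mod_eq_of_lt (by omega)
  have hclosed : ∀ s, IsClosedNBWalk G (ds s) := by
    intro s i
    dsimp only [ds]
    have ht : i.1 < k * n := by omega
    have hval : ((i + 1 : Fin (N + 1))).val = (i.1 + 1) % (N + 1) := by
      rw [Fin.val_add, hone]
    rcases Nat.lt_or_ge (i.1 + 1) (k * n) with hlt | hge
    · have hval2 : ((i + 1 : Fin (N + 1))).val = i.1 + 1 := by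
        rw [hval]; exact Nat.mod_eq_of_lt (by omega)
      rw [hval2]
      rcases Nat.eq_zero_or_pos ((i.1 + 1) % n) with h0 | hpos
      · exact hX _ _ _ _ (pred_mod hn0 h0) h0
      · rw [succ_div_eq hn0 (by omega)]
        exact hW _ _
    · have heq : i.1 + 1 = k * n := by omega
      have hval0 : ((i + 1 : Fin (N + 1))).val = 0 := by
        rw [hval, heq, ← hN, Nat.mod_self]
      rw [hval0]
      have hm : i.1 % n = n - 1 := by
        apply pred_mod hn0
        rw [heq]
        exact Nat.mul_mod_left k n
      have h0 : (0 : ℕ) / n = 0 := Nat.zero_div n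
      rw [h0]
      exact hX _ _ _ _ hm (Nat.zero_mod n)
  have hlen : ∀ s, nbWalkLength G l (ds s) ≤ T := by
    intro s
    have h1 : nbWalkLength G l (ds s) ≤ (Finset.univ : Finset (Fin (N + 1))).card • Lmax :=
      Finset.sum_le_card_nsmul _ _ _ (fun i _ => hLm _)
    rw [Finset.card_univ, Fintype.card_fin, nsmul_eq_mul] at h1
    refine le_trans h1 (le_trans (le_of_eq ?_) hT)
    rw [hN]
  let F : (Fin k → Bool) → {w : Σ m : ℕ, Fin (m + 1) → G.Dart //
      IsClosedNBWalk G w.2 ∧ nbWalkLength G l w.2 ≤ T} :=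
    fun s => ⟨⟨N, ds s⟩, hclosed s, hlen s⟩
  have hFinj : Function.Injective F := by
    intro s s' h
    funext q
    have h1 : (⟨N, ds s⟩ : Σ m : ℕ, Fin (m + 1) → G.Dart) = ⟨N, ds s'⟩ :=
      congrArg Subtype.val h
    rw [Sigma.ext_iff] at h1
    have h2 : ds s = ds s' := heq_iff_eq.1 h1.2
    have hb : q.1 * n + n ≤ k * n := by
      calc q.1 * n + n = (q.1 + 1) * n := by ring
        _ ≤ k * n := Nat.mul_le_mul_right n (Nat.succ_le_of_lt q.2)
    have hidx : q.1 * n + 1 < N + 1 := by omega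
    have h3 := congrFun h2 ⟨q.1 * n + 1, hidx⟩
    dsimp only [ds] at h3
    have hdiv : (q.1 * n + 1) / n = q.1 := by
      rw [mul_comm, Nat.mul_add_div hn0]
      simp [Nat.div_eq_of_lt hn]
    have hmod : (q.1 * n + 1) % n = 1 := by
      rw [mul_comm, Nat.mul_add_mod]
      exact Nat.mod_eq_of_lt hn
    rw [hdiv] at h3
    have hext : ∀ s'' : Fin k → Bool, ext s'' q.1 = s'' q := by
      intro s''
      dsimp only [ext]
      rw [dif_pos q.2]
    rw [hext, hext] at h3
    by_contra hq
    cases hsq : s q <;> cases hsq' : s' q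
    · exact hq (by rw [hsq, hsq'])
    · rw [hsq, hsq'] at h3
      exact hne _ hmod h3.symm
    · rw [hsq, hsq'] at h3
      exact hne _ hmod h3
    · exact hq (by rw [hsq, hsq'])
  have := @Nat.card_le_card_of_injective _ _ hfin F hFinj
  rw [Nat.card_eq_fintype_card] at this
  simpa [nbWalkCount, Fintype.card_fun] using this


end NBAux

/-- For a finite connected simple graph with all degrees at least `3` and a positive
edge-length function, the topological entropy is finite and strictly positive. -/
theorem graphEntropy_pos_and_finite {V : Type*} [Fintype V] (G : SimpleGraph V)
    [DecidableRel G.Adj]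
    (hconn : G.Connected) (hdeg : ∀ v : V, 3 ≤ G.degree v)
    (l : Sym2 V → ℝ) (hl : ∀ e ∈ G.edgeSet, 0 < l e) :
    0 < graphEntropy G l ∧ graphEntropy G l < ⊤ := by
  classical
  obtain ⟨v0⟩ := hconn.nonempty
  -- the graph has an edge
  have hdeg0 : 0 < G.degree v0 := lt_of_lt_of_le (by norm_num) (hdeg v0)
  rw [G.degree_pos_iff_exists_adj v0] at hdeg0
  obtain ⟨w0, hw0⟩ := hdeg0
  have heF : G.edgeFinset.Nonempty := ⟨s(v0, w0), by
    rw [SimpleGraph.mem_edgeFinset, SimpleGraph.mem_edgeSet]; exact hw0⟩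
  -- min and max edge lengths
  set m : ℝ := G.edgeFinset.inf' heF l with hmdef
  have hm : 0 < m := by
    rw [hmdef, Finset.lt_inf'_iff]
    intro e he
    exact hl e (SimpleGraph.mem_edgeFinset.1 he)
  have hml : ∀ e ∈ G.edgeSet, m ≤ l e := fun e he =>
    Finset.inf'_le l (SimpleGraph.mem_edgeFinset.2 he)
  set Lmax : ℝ := max (G.edgeFinset.sup' heF l) 1 with hLdef
  have hL1 : 1 ≤ Lmax := le_max_right _ _
  have hLpos : 0 < Lmax := lt_of_lt_of_le one_pos hL1
  have hLm : ∀ d : G.Dart, l d.edge ≤ Lmax := fun d =>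
    le_trans (Finset.le_sup' l (SimpleGraph.mem_edgeFinset.2 d.edge_mem)) (le_max_left _ _)
  have hfin : ∀ T : ℝ, Finite {w : Σ n : ℕ, Fin (n + 1) → G.Dart //
      IsClosedNBWalk G w.2 ∧ nbWalkLength G l w.2 ≤ T} := fun T =>
    NBAux.walk_finite l hm hml T
  set D : ℕ := Fintype.card G.Dart with hDdef
  constructor
  · -- positivity
    obtain ⟨n, hn1, W, hW, hX, hneW⟩ := NBAux.exists_two_loops hconn hdeg
    set c : ℝ := (n : ℝ) * Lmax with hcdef
    have hc : 0 < c := mul_pos (by exact_mod_cast Nat.lt_of_lt_of_le one_pos (by omega)) hLpos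
    set δ : ℝ := Real.log 2 / (2 * c) with hδdef
    have hδ : 0 < δ := div_pos (Real.log_pos one_lt_two) (by linarith)
    have hev : ∀ᶠ T : ℝ in Filter.atTop,
        ENNReal.ofReal δ ≤ ENNReal.ofReal (Real.log (nbWalkCount G l T : ℝ) / T) := by
      filter_upwards [Filter.eventually_ge_atTop (2 * c)] with T hT
      have hTpos : 0 < T := lt_of_lt_of_le (by linarith) hT
      set k : ℕ := ⌊T / c⌋₊ with hkdef
      have hk2 : 2 ≤ k := by
        rw [hkdef]
        apply Nat.le_floor
        rw [le_div_iff₀ hc]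
        push_cast
        linarith
      have hkT : ((k * n : ℕ) : ℝ) * Lmax ≤ T := by
        push_cast
        have h1 : (k : ℝ) ≤ T / c := Nat.floor_le (by positivity)
        calc (k : ℝ) * (n : ℝ) * Lmax = (k : ℝ) * c := by rw [hcdef]; ring
          _ ≤ (T / c) * c := by exact mul_le_mul_of_nonneg_right h1 (le_of_lt hc)
          _ = T := div_mul_cancel₀ T (ne_of_gt hc)
      have hcount := NBAux.count_lower l hn1 hW hX hneW hLm k (by omega) hkT (hfin T)
      apply ENNReal.ofReal_le_ofReal
      rw [le_div_iff₀ hTpos]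
      have hlog : (k : ℝ) * Real.log 2 ≤ Real.log (nbWalkCount G l T : ℝ) := by
        have h2 : Real.log ((2 : ℝ) ^ k) ≤ Real.log (nbWalkCount G l T : ℝ) := by
          apply Real.log_le_log (by positivity)
          exact_mod_cast hcount
        rwa [Real.log_pow] at h2
      have hkbig : T / (2 * c) ≤ (k : ℝ) := by
        have h3 : T / c - 1 < (k : ℝ) := Nat.sub_one_lt_floor (T / c)
        have h4 : T / (2 * c) = (T / c) / 2 := by
          rw [div_div]; ring_nf
        have h5 : 2 ≤ T / c := by rw [le_div_iff₀ hc]; linarith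
        rw [h4]
        linarith
      calc δ * T = Real.log 2 * (T / (2 * c)) := by rw [hδdef]; ring
        _ ≤ Real.log 2 * (k : ℝ) := by
            exact mul_le_mul_of_nonneg_left hkbig (le_of_lt (Real.log_pos one_lt_two))
        _ = (k : ℝ) * Real.log 2 := by ring
        _ ≤ Real.log (nbWalkCount G l T : ℝ) := hlog
    have hle : ENNReal.ofReal δ ≤ graphEntropy G l :=
      Filter.le_limsup_of_frequently_le hev.frequently
    exact lt_of_lt_of_le (by rwa [ENNReal.ofReal_pos]) hle
  · -- finiteness
    set C : ℝ := (1 / m + 2) * (1 + Real.log (D + 1)) with hCdef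
    have hlogD : 0 ≤ Real.log ((D : ℝ) + 1) := Real.log_nonneg (by
      have : (0 : ℝ) ≤ (D : ℝ) := Nat.cast_nonneg D
      linarith)
    have hC : 0 ≤ C := by
      rw [hCdef]
      have : 0 < 1 / m := by positivity
      nlinarith
    have hub : graphEntropy G l ≤ ENNReal.ofReal C := by
      apply Filter.limsup_le_of_le (by isBoundedDefault)
      filter_upwards [Filter.eventually_ge_atTop (1 : ℝ)] with T hT
      have hTpos : 0 < T := lt_of_lt_of_le one_pos hT
      set K : ℕ := ⌈T / m⌉₊ with hKdef
      have hK : T ≤ (K + 1) * m := by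
        have h1 : T / m ≤ (K : ℝ) := Nat.le_ceil _
        rw [div_le_iff₀ hm] at h1
        nlinarith
      have hcount := NBAux.count_le l hm hml T K hK
      apply ENNReal.ofReal_le_ofReal
      rcases Nat.eq_zero_or_pos (nbWalkCount G l T) with h0 | hpos
      · rw [h0]
        simp [Real.log_zero]
        positivity
      · rw [div_le_iff₀ hTpos]
        have hlog1 : Real.log (nbWalkCount G l T : ℝ) ≤
            Real.log (((K + 1) * (D + 1) ^ (K + 1) : ℕ) : ℝ) := by
          apply Real.log_le_log (by exact_mod_cast hpos)
          exact_mod_cast hcount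
        have hlog2 : Real.log (((K + 1) * (D + 1) ^ (K + 1) : ℕ) : ℝ) =
            Real.log ((K : ℝ) + 1) + ((K : ℝ) + 1) * Real.log ((D : ℝ) + 1) := by
          push_cast
          rw [Real.log_mul (by positivity) (by positivity), Real.log_pow]
          push_cast
          ring
        have hlog3 : Real.log ((K : ℝ) + 1) ≤ (K : ℝ) + 1 := by
          have := Real.log_le_sub_one_of_pos (show (0 : ℝ) < (K : ℝ) + 1 by positivity)
          linarith
        have hKbound : (K : ℝ) + 1 ≤ T / m + 2 := by
          have := Nat.ceil_lt_add_one (show (0 : ℝ) ≤ T / m by positivity)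
          rw [hKdef]
          push_cast
          linarith
        have hchain : Real.log (nbWalkCount G l T : ℝ) ≤
            (T / m + 2) * (1 + Real.log ((D : ℝ) + 1)) := by
          rw [hlog2] at hlog1
          nlinarith [hlog1, hlog3, hKbound, hlogD]
        have hfinal : (T / m + 2) * (1 + Real.log ((D : ℝ) + 1)) ≤ C * T := by
          rw [hCdef]
          have h2T : (2 : ℝ) ≤ 2 * T := by linarith
          have hdm : T / m = T * (1 / m) := by ring
          nlinarith [hlogD, hT, hm]
        linarith
    exact lt_of_le_of_lt hub ENNReal.ofReal_lt_top
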